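/- Let n ≥ 1, p > 1, A > 0, Λ > 0 and set α = 2/(p−1). Then there exists C > 0 such that for every R ≥ 1 the function w_R(x) = C · R^{2α} · (R² − ‖x‖²)^{−α}, defined on the open ball B_R of radius R centered at the origin in ℝⁿ, is convex on B_R and satisfies Λ · Δw_R(x) ≤ (A/(1 + ‖x‖²)) · w_R(x)^p for all x with ‖x‖ < R. -/

import Mathlib

open scoped BigOperators

/-- The Laplacian of `f : ℝⁿ → ℝ` at `x`: the trace of the Hessian, computed
as the sum of the second derivatives in the coordinate directions. -/
noncomputable def laplacian {n : ℕ} (f : EuclideanSpace ℝ (Fin n) → ℝ)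
    (x : EuclideanSpace ℝ (Fin n)) : ℝ :=
  ∑ i, fderiv ℝ (fun y => fderiv ℝ f y (EuclideanSpace.single i 1)) x
    (EuclideanSpace.single i 1)

section Aux

open Real Set

lemma barrier_hasFDerivAt {n : ℕ} (c α R : ℝ) (x : EuclideanSpace ℝ (Fin n))
    (ht : 0 < R ^ 2 - ‖x‖ ^ 2) :
    HasFDerivAt (fun y : EuclideanSpace ℝ (Fin n) => c * (R ^ 2 - ‖y‖ ^ 2) ^ (-α))
      ((2 * α * c * (R ^ 2 - ‖x‖ ^ 2) ^ (-α - 1)) • innerSL ℝ x) x := by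
  have h1 : HasFDerivAt (fun y : EuclideanSpace ℝ (Fin n) => ‖y‖ ^ 2) (2 • innerSL ℝ x) x :=
    (hasStrictFDerivAt_norm_sq x).hasFDerivAt
  have h2 : HasFDerivAt (fun y : EuclideanSpace ℝ (Fin n) => R ^ 2 - ‖y‖ ^ 2)
      (-(2 • innerSL ℝ x)) x := h1.const_sub (R ^ 2)
  have h3 := h2.rpow_const (p := -α) (Or.inl ht.ne')
  have h4 := h3.const_mul c
  refine h4.congr_fderiv ?_
  ext v
  simp only [ContinuousLinearMap.coe_smul', Pi.smul_apply, ContinuousLinearMap.neg_apply,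
    smul_eq_mul]
  ring

lemma barrier_fderiv_apply {n : ℕ} (c α R : ℝ) (y : EuclideanSpace ℝ (Fin n))
    (ht : 0 < R ^ 2 - ‖y‖ ^ 2) (i : Fin n) :
    fderiv ℝ (fun y : EuclideanSpace ℝ (Fin n) => c * (R ^ 2 - ‖y‖ ^ 2) ^ (-α)) y
        (EuclideanSpace.single i 1)
      = 2 * α * c * (R ^ 2 - ‖y‖ ^ 2) ^ (-α - 1) * y i := by
  rw [(barrier_hasFDerivAt c α R y ht).fderiv]
  simp [EuclideanSpace.inner_single_right, real_inner_comm]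

lemma barrier_laplacian {n : ℕ} (c α R : ℝ) (x : EuclideanSpace ℝ (Fin n))
    (hx : ‖x‖ < R) (hR : 0 < R) :
    laplacian (fun y : EuclideanSpace ℝ (Fin n) => c * (R ^ 2 - ‖y‖ ^ 2) ^ (-α)) x
      = n * (2 * α * c * (R ^ 2 - ‖x‖ ^ 2) ^ (-α - 1))
        + 2 * (α + 1) * (2 * α * c) * (R ^ 2 - ‖x‖ ^ 2) ^ (-α - 2) * ‖x‖ ^ 2 := by
  have hxnn : 0 ≤ ‖x‖ := norm_nonneg x
  have ht : 0 < R ^ 2 - ‖x‖ ^ 2 := by nlinarith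
  have hxball : x ∈ Metric.ball (0 : EuclideanSpace ℝ (Fin n)) R := by
    simpa [Metric.mem_ball, dist_zero_right] using hx
  have key : ∀ i : Fin n,
      fderiv ℝ (fun y => fderiv ℝ
          (fun y : EuclideanSpace ℝ (Fin n) => c * (R ^ 2 - ‖y‖ ^ 2) ^ (-α)) y
          (EuclideanSpace.single i 1)) x (EuclideanSpace.single i 1)
        = 2 * α * c * (R ^ 2 - ‖x‖ ^ 2) ^ (-α - 1)
          + 2 * (α + 1) * (2 * α * c) * (R ^ 2 - ‖x‖ ^ 2) ^ (-α - 2) * (x i) ^ 2 := by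
    intro i
    set G : EuclideanSpace ℝ (Fin n) → ℝ :=
      fun y => (2 * α * c) * (R ^ 2 - ‖y‖ ^ 2) ^ (-(α + 1)) * y i with hG
    have heq : (fun y => fderiv ℝ
        (fun y : EuclideanSpace ℝ (Fin n) => c * (R ^ 2 - ‖y‖ ^ 2) ^ (-α)) y
        (EuclideanSpace.single i 1)) =ᶠ[nhds x] G := by
      refine Filter.eventuallyEq_of_mem (Metric.isOpen_ball.mem_nhds hxball) ?_
      intro y hy
      have hy' : ‖y‖ < R := by simpa [Metric.mem_ball, dist_zero_right] using hy
      have hty : 0 < R ^ 2 - ‖y‖ ^ 2 := by nlinarith [norm_nonneg y]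
      dsimp only
      rw [barrier_fderiv_apply c α R y hty i]
      simp only [hG]
      rw [show -(α + 1) = -α - 1 by ring]
    have hF1 : HasFDerivAt (fun y : EuclideanSpace ℝ (Fin n) =>
        (2 * α * c) * (R ^ 2 - ‖y‖ ^ 2) ^ (-(α + 1)))
        ((2 * (α + 1) * (2 * α * c) * (R ^ 2 - ‖x‖ ^ 2) ^ (-(α + 1) - 1)) • innerSL ℝ x) x :=
      barrier_hasFDerivAt (2 * α * c) (α + 1) R x ht
    have hF2 : HasFDerivAt (fun y : EuclideanSpace ℝ (Fin n) => y i)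
        (EuclideanSpace.proj (𝕜 := ℝ) i) x := (EuclideanSpace.proj (𝕜 := ℝ) i).hasFDerivAt
    have hGder := hF1.mul hF2
    rw [heq.fderiv_eq, (show HasFDerivAt G _ x from hGder).fderiv]
    have h1 : (EuclideanSpace.proj (𝕜 := ℝ) i) (EuclideanSpace.single i (1:ℝ)) = 1 := by
      simp
    have h2 : (innerSL ℝ x) (EuclideanSpace.single i (1:ℝ)) = x i := by
      simp [EuclideanSpace.inner_single_right]
    simp only [ContinuousLinearMap.add_apply, ContinuousLinearMap.coe_smul', Pi.smul_apply,
      smul_eq_mul, h1, h2]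
    have hexp : -(α + 1) - 1 = -α - 2 := by ring
    have hexp2 : -(α + 1) = -α - 1 := by ring
    rw [hexp, hexp2]
    ring
  unfold laplacian
  rw [Finset.sum_congr rfl fun i _ => key i]
  rw [Finset.sum_add_distrib, Finset.sum_const, ← Finset.mul_sum]
  have hsum : ∑ i, (x i) ^ 2 = ‖x‖ ^ 2 := by
    rw [PiLp.norm_sq_eq_of_L2]
    simp [Real.norm_eq_abs, sq_abs]
  rw [hsum, Finset.card_univ, Fintype.card_fin, nsmul_eq_mul]
  try ring

lemma barrier_convexOn {n : ℕ} (hn : 1 ≤ n) (c α R : ℝ) (hc : 0 ≤ c) (hα : 0 < α)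
    (hR : 0 < R) :
    ConvexOn ℝ (Metric.ball (0 : EuclideanSpace ℝ (Fin n)) R)
      (fun x : EuclideanSpace ℝ (Fin n) => c * (R ^ 2 - ‖x‖ ^ 2) ^ (-α)) := by
  set g : ℝ → ℝ := fun r => (R ^ 2 - r ^ 2) ^ (-α) with hgdef
  set D : Set ℝ := Set.Ico 0 R with hD
  have hint : interior D = Set.Ioo 0 R := by rw [hD, interior_Ico]
  have hpos : ∀ r : ℝ, 0 ≤ r → r < R → 0 < R ^ 2 - r ^ 2 := by intro r h1 h2; nlinarith
  have hcont : ContinuousOn g D := by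
    apply ContinuousOn.rpow_const
    · exact (continuous_const.sub (continuous_pow 2)).continuousOn
    · intro r hr
      rw [hD, Set.mem_Ico] at hr
      exact Or.inl (hpos r hr.1 hr.2).ne'
  have hbase : ∀ r : ℝ, r < R → r > 0 → R ^ 2 - r ^ 2 ≠ 0 := by
    intro r h1 h2; nlinarith
  set g' : ℝ → ℝ := fun r => 2 * α * r * (R ^ 2 - r ^ 2) ^ (-α - 1) with hg'def
  have hder1 : ∀ r : ℝ, 0 < r → r < R → HasDerivAt g (g' r) r := by
    intro r h0 h1
    have hb : HasDerivAt (fun s : ℝ => R ^ 2 - s ^ 2) (-(2 * r)) r := by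
      simpa using (hasDerivAt_pow 2 r).const_sub (R ^ 2)
    have h2 := hb.rpow_const (p := -α) (Or.inl (hbase r h1 h0))
    convert h2 using 1
    rw [hg'def]
    ring
  have hder2 : ∀ r : ℝ, 0 < r → r < R →
      HasDerivAt g' (2 * α * (R ^ 2 - r ^ 2) ^ (-α - 1)
        + 2 * α * r * ((α + 1) * (R ^ 2 - r ^ 2) ^ (-α - 2) * (2 * r))) r := by
    intro r h0 h1
    have hb : HasDerivAt (fun s : ℝ => R ^ 2 - s ^ 2) (-(2 * r)) r := by
      simpa using (hasDerivAt_pow 2 r).const_sub (R ^ 2)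
    have hc1 : HasDerivAt (fun s : ℝ => 2 * α * s) (2 * α) r := by
      simpa using (hasDerivAt_id r).const_mul (2 * α)
    have hd1 := hb.rpow_const (p := -α - 1) (Or.inl (hbase r h1 h0))
    have := hc1.mul hd1
    convert (show HasDerivAt g' _ r from this) using 1
    rw [show -α - 1 - 1 = -α - 2 by ring]
    ring
  have hDconv : Convex ℝ D := convex_Ico 0 R
  have hgconv : ConvexOn ℝ D g := by
    apply convexOn_of_hasDerivWithinAt2_nonneg hDconv hcont (f' := g')
      (f'' := fun r => 2 * α * (R ^ 2 - r ^ 2) ^ (-α - 1)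
        + 2 * α * r * ((α + 1) * (R ^ 2 - r ^ 2) ^ (-α - 2) * (2 * r)))
    · intro r hr; rw [hint] at hr
      exact (hder1 r hr.1 hr.2).hasDerivWithinAt
    · intro r hr; rw [hint] at hr
      exact (hder2 r hr.1 hr.2).hasDerivWithinAt
    · intro r hr; rw [hint] at hr
      have h1 := hpos r hr.1.le hr.2
      have h2 := hr.1
      positivity
  have hgmono : MonotoneOn g D := by
    apply monotoneOn_of_deriv_nonneg hDconv hcont
    · intro r hr; rw [hint] at hr
      exact (hder1 r hr.1 hr.2).differentiableAt.differentiableWithinAt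
    · intro r hr; rw [hint] at hr
      rw [(hder1 r hr.1 hr.2).deriv, hg'def]
      have h1 := hpos r hr.1.le hr.2
      have h2 := hr.1
      positivity
  have himg : (fun x : EuclideanSpace ℝ (Fin n) => ‖x‖) ''
      Metric.ball (0 : EuclideanSpace ℝ (Fin n)) R = D := by
    ext r
    constructor
    · rintro ⟨x, hx, rfl⟩
      rw [Metric.mem_ball, dist_zero_right] at hx
      exact ⟨norm_nonneg x, hx⟩
    · intro hr
      rw [hD, Set.mem_Ico] at hr
      refine ⟨EuclideanSpace.single (⟨0, hn⟩ : Fin n) r, ?_, ?_⟩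
      · rw [Metric.mem_ball, dist_zero_right, EuclideanSpace.norm_single,
          Real.norm_eq_abs, abs_of_nonneg hr.1]
        exact hr.2
      · show ‖EuclideanSpace.single (⟨0, hn⟩ : Fin n) r‖ = r
        rw [EuclideanSpace.norm_single, Real.norm_eq_abs, abs_of_nonneg hr.1]
  have hnorm : ConvexOn ℝ (Metric.ball (0 : EuclideanSpace ℝ (Fin n)) R)
      (fun x : EuclideanSpace ℝ (Fin n) => ‖x‖) :=
    convexOn_norm (convex_ball (0 : EuclideanSpace ℝ (Fin n)) R)
  have hcomp := ConvexOn.comp (himg ▸ hgconv) hnorm (himg ▸ hgmono)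
  have hfinal := hcomp.smul hc
  exact hfinal


lemma final_calc (nr A Lam a C Cp ρ S Q u : ℝ)
    (hA : 0 < A) (hLam : 0 ≤ Lam) (ha : 0 ≤ a) (hn0 : 0 ≤ nr) (hC : 0 ≤ C)
    (hρ : 0 ≤ ρ) (hS : 0 ≤ S) (hQ : 1 ≤ Q) (hu0 : 0 ≤ u) (huQ : u < Q)
    (hACp : A * Cp = A * C + 2 * Lam * (2 * a * nr + 4 * a * (a + 1)) * C) :
    Lam * (nr * (2 * a * (C * ρ) * (S * (Q - u))) + 2 * (a + 1) * (2 * a * (C * ρ)) * S * u)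
      ≤ A / (1 + u) * (Cp * ρ * Q ^ 2 * S) := by
  have h1u : 0 < 1 + u := by linarith
  have h2Q : 0 < 2 * Q := by linarith
  have hQ0 : 0 < Q := by linarith
  have hM : 0 ≤ Lam * C * ρ * S :=
    mul_nonneg (mul_nonneg (mul_nonneg hLam hC) hρ) hS
  have e2 : 2 * a * nr * (Q - u) + 4 * a * (a + 1) * u
      ≤ (2 * a * nr + 4 * a * (a + 1)) * Q := by
    have t1 : 0 ≤ a * (a + 1) * (Q - u) :=
      mul_nonneg (mul_nonneg ha (by linarith)) (by linarith)
    have t2 : 0 ≤ a * nr * u := mul_nonneg (mul_nonneg ha hn0) hu0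
    nlinarith [t1, t2]
  have hCp0 : 0 ≤ Cp := by
    have hB0 : 0 ≤ 2 * a * nr + 4 * a * (a + 1) := by nlinarith
    have h0 : 0 ≤ A * Cp := by
      rw [hACp]
      have h1 : 0 ≤ A * C := mul_nonneg hA.le hC
      have h2 : 0 ≤ 2 * Lam * (2 * a * nr + 4 * a * (a + 1)) * C :=
        mul_nonneg (mul_nonneg (by linarith : (0:ℝ) ≤ 2 * Lam) hB0) hC
      linarith
    nlinarith [h0]
  calc Lam * (nr * (2 * a * (C * ρ) * (S * (Q - u))) + 2 * (a + 1) * (2 * a * (C * ρ)) * S * u)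
      = Lam * C * ρ * S * (2 * a * nr * (Q - u) + 4 * a * (a + 1) * u) := by ring
    _ ≤ Lam * C * ρ * S * ((2 * a * nr + 4 * a * (a + 1)) * Q) :=
        mul_le_mul_of_nonneg_left e2 hM
    _ ≤ A / (2 * Q) * (Cp * ρ * Q ^ 2 * S) := by
        rw [div_mul_eq_mul_div, le_div_iff₀ h2Q]
        have e3 : A * (Cp * ρ * Q ^ 2 * S) = (A * Cp) * (ρ * Q ^ 2 * S) := by ring
        rw [e3, hACp]
        have hnn : 0 ≤ A * C * ρ * Q ^ 2 * S :=
          mul_nonneg (mul_nonneg (mul_nonneg (mul_nonneg hA.le hC) hρ) (sq_nonneg Q)) hS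
        nlinarith [hnn]
    _ ≤ A / (1 + u) * (Cp * ρ * Q ^ 2 * S) := by
        have hX : 0 ≤ Cp * ρ * Q ^ 2 * S :=
          mul_nonneg (mul_nonneg (mul_nonneg hCp0 hρ) (sq_nonneg Q)) hS
        have hdiv : A / (2 * Q) ≤ A / (1 + u) := by
          apply div_le_div_of_nonneg_left hA.le h1u (by linarith)
        exact mul_le_mul_of_nonneg_right hdiv hX

end Aux

/-- the Osserman-type barrier
`w_R(x) = C R^{2α} (R² − ‖x‖²)^{−α}`, with `α = 2/(p−1)`, is convex on `B_R`
and satisfies `Λ Δw_R ≤ A (1+‖x‖²)^{−1} w_R^p` on `B_R`, for a suitable `C > 0`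
independent of `R ≥ 1`. -/
theorem stmt_9 (n : ℕ) (hn : 1 ≤ n) (p A Lam α : ℝ)
    (hp : 1 < p) (hA : 0 < A) (hLam : 0 < Lam) (hα : α = 2 / (p - 1)) :
    ∃ C : ℝ, 0 < C ∧ ∀ R : ℝ, 1 ≤ R →
      ConvexOn ℝ (Metric.ball (0 : EuclideanSpace ℝ (Fin n)) R)
        (fun x : EuclideanSpace ℝ (Fin n) =>
          C * R ^ (2 * α) * (R ^ 2 - ‖x‖ ^ 2) ^ (-α)) ∧
      ∀ x : EuclideanSpace ℝ (Fin n), ‖x‖ < R →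
        Lam * laplacian (fun x : EuclideanSpace ℝ (Fin n) =>
            C * R ^ (2 * α) * (R ^ 2 - ‖x‖ ^ 2) ^ (-α)) x ≤
          A / (1 + ‖x‖ ^ 2) * (C * R ^ (2 * α) * (R ^ 2 - ‖x‖ ^ 2) ^ (-α)) ^ p := by
  have hp1 : 0 < p - 1 := by linarith
  have hα0 : 0 < α := by rw [hα]; positivity
  have hαval : α * (p - 1) = 2 := by rw [hα]; field_simp
  have hn0 : (0:ℝ) ≤ (n:ℝ) := Nat.cast_nonneg n
  set K : ℝ := 2 * Lam * (2 * α * n + 4 * α * (α + 1)) / A with hK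
  have hB0 : 0 < 2 * α * n + 4 * α * (α + 1) := by nlinarith
  have hK0 : 0 < K := by rw [hK]; positivity
  set C : ℝ := (1 + K) ^ (1 / (p - 1)) with hC
  have hC0 : 0 < C := by rw [hC]; positivity
  have hCpow : C ^ (p - 1) = 1 + K := by
    rw [hC, ← Real.rpow_mul (by positivity), one_div,
      inv_mul_cancel₀ hp1.ne', Real.rpow_one]
  have hCp : C ^ p = (1 + K) * C := by
    rw [show p = (p - 1) + 1 by ring, Real.rpow_add hC0, hCpow, Real.rpow_one]
  have hAK : A * K = 2 * Lam * (2 * α * n + 4 * α * (α + 1)) := by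
    rw [hK]; field_simp
  have hACp : A * C ^ p = A * C + 2 * Lam * (2 * α * (n:ℝ) + 4 * α * (α + 1)) * C := by
    rw [hCp]; linear_combination C * hAK
  refine ⟨C, hC0, fun R hR => ?_⟩
  have hR0 : 0 < R := by linarith
  have hρ : 0 < R ^ (2 * α) := Real.rpow_pos_of_pos hR0 _
  have hcc : 0 < C * R ^ (2 * α) := mul_pos hC0 hρ
  refine ⟨barrier_convexOn hn (C * R ^ (2 * α)) α R hcc.le hα0 hR0, ?_⟩
  intro x hx
  have hxnn : 0 ≤ ‖x‖ := norm_nonneg x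
  rw [barrier_laplacian (C * R ^ (2 * α)) α R x hx hR0]
  set u : ℝ := ‖x‖ ^ 2 with hu
  have hu0 : 0 ≤ u := by rw [hu]; positivity
  have hQ1 : 1 ≤ R ^ 2 := by nlinarith
  have huQ : u < R ^ 2 := by rw [hu]; nlinarith
  have ht : 0 < R ^ 2 - u := by linarith
  have htα : 0 < (R ^ 2 - u) ^ (-α) := Real.rpow_pos_of_pos ht _
  have hS : 0 < (R ^ 2 - u) ^ (-α - 2) := Real.rpow_pos_of_pos ht _
  have hexpt : -α * p = -α - 2 := by linear_combination -hαval
  have hexpR : 2 * α * p = 2 * α + 4 := by linear_combination 2 * hαval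
  have hrw : (C * R ^ (2 * α) * (R ^ 2 - u) ^ (-α)) ^ p
      = C ^ p * R ^ (2 * α) * (R ^ 2) ^ 2 * (R ^ 2 - u) ^ (-α - 2) := by
    rw [Real.mul_rpow (by positivity) htα.le, Real.mul_rpow hC0.le hρ.le,
      ← Real.rpow_mul hR0.le, ← Real.rpow_mul ht.le, hexpt, hexpR,
      Real.rpow_add hR0, show (4:ℝ) = ((4:ℕ):ℝ) by norm_num, Real.rpow_natCast]
    ring
  rw [hrw]
  have ht1 : (R ^ 2 - u) ^ (-α - 1) = (R ^ 2 - u) ^ (-α - 2) * (R ^ 2 - u) := by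
    rw [show -α - 1 = (-α - 2) + 1 by ring, Real.rpow_add ht, Real.rpow_one]
  rw [ht1]
  exact final_calc (n:ℝ) A Lam α C (C ^ p) (R ^ (2 * α)) ((R ^ 2 - u) ^ (-α - 2)) (R ^ 2) u
    hA hLam.le hα0.le hn0 hC0.le hρ.le hS.le hQ1 hu0 huQ hACp
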